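/- The function ξ(x) = 1/(x(1−x)) − R(x) is strictly increasing on (0, 1/2], with lim_{x→0⁺} ξ(x) = 1 and ξ(1/2) = 4 − 4·log 2; hence ξ maps (0,1/2] onto (1, 4 − 4·log 2]. -/

import Mathlib

open Real Set Filter Topology

/-- The digamma function `ψ(x) = Γ'(x)/Γ(x)`. -/
noncomputable def digamma (x : ℝ) : ℝ := deriv Real.Gamma x / Real.Gamma x

/-- The Ramanujan constant function `R(x) = -2γ - ψ(x) - ψ(1-x)`. -/
noncomputable def ramanujanR (x : ℝ) : ℝ :=
  -2 * Real.eulerMascheroniConstant - digamma x - digamma (1 - x)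

/-- The Riemann zeta function as a real series `ζ(s) = Σ_{n=1}^∞ n^{-s}`. -/
noncomputable def zetaR (s : ℝ) : ℝ := ∑' n : ℕ, 1 / ((n : ℝ) + 1) ^ s

/-- The generalized elliptic integral of the first kind
`K_a(r) = (π/2) Σ_{n=0}^∞ ((a)_n (1-a)_n / (n!)^2) r^(2n)`. -/
noncomputable def Ka (a r : ℝ) : ℝ :=
  Real.pi / 2 * ∑' n : ℕ,
    (Polynomial.eval a (ascPochhammer ℝ n) * Polynomial.eval (1 - a) (ascPochhammer ℝ n)
      / (Nat.factorial n : ℝ) ^ 2) * r ^ (2 * n)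

/-- The generalized elliptic integral of the second kind
`E_a(r) = (π/2) Σ_{n=0}^∞ ((a-1)_n (1-a)_n / (n!)^2) r^(2n)`. -/
noncomputable def Ea (a r : ℝ) : ℝ :=
  Real.pi / 2 * ∑' n : ℕ,
    (Polynomial.eval (a - 1) (ascPochhammer ℝ n) * Polynomial.eval (1 - a) (ascPochhammer ℝ n)
      / (Nat.factorial n : ℝ) ^ 2) * r ^ (2 * n)

lemma hasDerivAt_logGamma {x : ℝ} (hx : 0 < x) :
    HasDerivAt (fun y => Real.log (Real.Gamma y)) (digamma x) x := by
  have hg : DifferentiableAt ℝ Real.Gamma x :=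
    Real.differentiableAt_Gamma (fun m => ((neg_nonpos.mpr (Nat.cast_nonneg m)).trans_lt hx).ne')
  exact hg.hasDerivAt.log (Real.Gamma_pos_of_pos hx).ne'

lemma digamma_rec {x : ℝ} (hx : 0 < x) : digamma (x + 1) = digamma x + 1 / x := by
  have h1 : HasDerivAt (fun y => Real.log (Real.Gamma (y + 1))) (digamma (x + 1)) x := by
    have := (hasDerivAt_logGamma (by positivity : (0:ℝ) < x + 1)).comp x
      ((hasDerivAt_id x).add_const 1)
    simpa [Function.comp_def] using this
  have h2 : HasDerivAt (fun y => Real.log (Real.Gamma y) + Real.log y)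
      (digamma x + 1 / x) x := by
    simpa [one_div, Pi.add_def] using (hasDerivAt_logGamma hx).add (Real.hasDerivAt_log hx.ne')
  have heq : (fun y => Real.log (Real.Gamma (y + 1)))
      =ᶠ[nhds x] (fun y => Real.log (Real.Gamma y) + Real.log y) := by
    filter_upwards [eventually_gt_nhds hx] with y hy
    rw [Real.Gamma_add_one hy.ne', Real.log_mul hy.ne' (Real.Gamma_pos_of_pos hy).ne', add_comm]
  exact (h1.congr_of_eventuallyEq heq.symm).unique h2

lemma digamma_mono {a b : ℝ} (ha : 0 < a) (hab : a ≤ b) : digamma a ≤ digamma b := by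
  rcases eq_or_lt_of_le hab with rfl | h
  · exact le_refl _
  have hb : 0 < b := ha.trans h
  have hc := Real.convexOn_log_Gamma
  have hda : deriv (Real.log ∘ Real.Gamma) a = digamma a :=
    (hasDerivAt_logGamma ha).deriv
  have hdb : deriv (Real.log ∘ Real.Gamma) b = digamma b :=
    (hasDerivAt_logGamma hb).deriv
  calc digamma a = deriv (Real.log ∘ Real.Gamma) a := hda.symm
    _ ≤ slope (Real.log ∘ Real.Gamma) a b :=
        hc.deriv_le_slope (mem_Ioi.mpr ha) (mem_Ioi.mpr hb) h
          (hasDerivAt_logGamma ha).differentiableAt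
    _ ≤ deriv (Real.log ∘ Real.Gamma) b :=
        hc.slope_le_deriv (mem_Ioi.mpr ha) (mem_Ioi.mpr hb) h
          (hasDerivAt_logGamma hb).differentiableAt
    _ = digamma b := hdb

lemma digamma_one : digamma 1 = -Real.eulerMascheroniConstant := by
  rw [digamma, Real.hasDerivAt_Gamma_one.deriv, Real.Gamma_one, div_one]

lemma digamma_nat (n : ℕ) :
    digamma (n + 1) = -Real.eulerMascheroniConstant
      + ∑ k ∈ Finset.range n, 1 / ((k : ℝ) + 1) := by
  induction n with
  | zero => simpa using digamma_one
  | succ n ih =>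
    have : ((n : ℝ) + 1) + 1 = ((n + 1 : ℕ) : ℝ) + 1 := by push_cast; ring
    rw [← this, digamma_rec (by positivity), ih, Finset.sum_range_succ]
    ring

lemma digamma_shift {x : ℝ} (hx : 0 < x) (n : ℕ) :
    digamma (x + n) = digamma x + ∑ k ∈ Finset.range n, 1 / (x + k) := by
  induction n with
  | zero => simp
  | succ n ih =>
    have : x + ((n + 1 : ℕ) : ℝ) = (x + n) + 1 := by push_cast; ring
    rw [this, digamma_rec (by positivity), ih, Finset.sum_range_succ]
    push_cast; ring

lemma summable_sq : Summable (fun k : ℕ => 1 / ((k : ℝ) + 1) ^ 2) := by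
  have := Real.summable_one_div_nat_pow.mpr (le_refl 2)
  exact_mod_cast (summable_nat_add_iff 1).mpr this

lemma summable_digamma_term {x : ℝ} (hx : 0 < x) (hx1 : x ≤ 1) :
    Summable (fun k : ℕ => 1 / ((k : ℝ) + 1) - 1 / ((k : ℝ) + x)) := by
  rw [← summable_abs_iff]
  have hg : Summable (fun k : ℕ => (1/x) * (1 / ((k : ℝ) + 1) ^ 2)) := summable_sq.mul_left _
  refine Summable.of_nonneg_of_le (fun k => abs_nonneg _) (fun k => ?_) hg
  have hk1 : (0:ℝ) < (k : ℝ) + 1 := by positivity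
  have hkx : (0:ℝ) < (k : ℝ) + x := by positivity
  rw [abs_le]
  constructor
  · have h1 : 1 / ((k : ℝ) + x) - 1 / ((k : ℝ) + 1) = (1 - x) / (((k:ℝ)+1) * ((k:ℝ)+x)) := by
      rw [div_sub_div _ _ hkx.ne' hk1.ne']
      congr 1 <;> ring
    have h2 : x * ((k:ℝ)+1) ≤ (k:ℝ)+x := by nlinarith [Nat.cast_nonneg (α := ℝ) k]
    have h3 : (1 - x) / (((k:ℝ)+1) * ((k:ℝ)+x)) ≤ 1 / (x * ((k:ℝ)+1)^2) := by
      rw [div_le_div_iff₀ (by positivity) (by positivity)]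
      nlinarith [Nat.cast_nonneg (α := ℝ) k, mul_le_mul_of_nonneg_left h2 hk1.le,
        mul_nonneg (mul_nonneg hx.le hk1.le) hk1.le]
    have h4 : 1/x * (1/((k:ℝ)+1)^2) = 1/(x*((k:ℝ)+1)^2) := by rw [div_mul_div_comm, one_mul]
    linarith
  · have h5 : 1 / ((k : ℝ) + 1) - 1 / ((k : ℝ) + x) ≤ 0 := by
      apply sub_nonpos.mpr
      apply one_div_le_one_div_of_le hkx
      linarith
    have hpos : (0:ℝ) ≤ 1/x * (1/((k:ℝ)+1)^2) := by positivity
    linarith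

lemma digamma_add_gamma_eq {x : ℝ} (hx : 0 < x) (hx1 : x ≤ 1) :
    digamma x + Real.eulerMascheroniConstant
      = ∑' k : ℕ, (1 / ((k : ℝ) + 1) - 1 / ((k : ℝ) + x)) := by
  set γ := Real.eulerMascheroniConstant with hγ
  have hs := summable_digamma_term hx hx1
  set S := ∑' k : ℕ, (1 / ((k : ℝ) + 1) - 1 / ((k : ℝ) + x)) with hS
  set b : ℕ → ℝ := fun n => ∑ k ∈ Finset.range n, (1 / ((k : ℝ) + 1) - 1 / ((k : ℝ) + x))
    with hb
  have htend : Tendsto (fun n => b (n + 1)) atTop (𝓝 S) :=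
    hs.hasSum.tendsto_sum_nat.comp (tendsto_add_atTop_nat 1)
  have key : ∀ n : ℕ, b (n + 1) - 1 / ((n : ℝ) + 1) ≤ digamma x + γ
      ∧ digamma x + γ ≤ b (n + 1) := by
    intro n
    have hxn : digamma (x + ((n + 1 : ℕ) : ℝ))
        = digamma x + ∑ k ∈ Finset.range (n + 1), 1 / (x + (k : ℝ)) := digamma_shift hx (n + 1)
    have hb1 : digamma ((n : ℝ) + 1) ≤ digamma (x + ((n + 1 : ℕ) : ℝ)) :=
      digamma_mono (by positivity) (by push_cast; linarith)
    have hb2 : digamma (x + ((n + 1 : ℕ) : ℝ)) ≤ digamma (((n + 1 : ℕ) : ℝ) + 1) :=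
      digamma_mono (by positivity) (by push_cast; linarith)
    rw [digamma_nat n, hxn] at hb1
    rw [digamma_nat (n + 1), hxn] at hb2
    have hsplit : b (n + 1) = (∑ k ∈ Finset.range (n + 1), 1 / ((k : ℝ) + 1))
        - ∑ k ∈ Finset.range (n + 1), 1 / (x + (k : ℝ)) := by
      rw [hb, ← Finset.sum_sub_distrib]
      exact Finset.sum_congr rfl (fun k _ => by rw [add_comm x (k : ℝ)])
    rw [Finset.sum_range_succ] at hsplit
    rw [Finset.sum_range_succ (f := fun k => 1 / ((k : ℝ) + 1))] at hb2
    constructor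
    · rw [hsplit]; linarith
    · rw [hsplit]; linarith
  refine le_antisymm ?_ ?_
  · exact ge_of_tendsto' htend (fun n => (key n).2)
  · have h0 : Tendsto (fun n : ℕ => b (n + 1) - 1 / ((n : ℝ) + 1)) atTop (𝓝 (S - 0)) :=
      htend.sub tendsto_one_div_add_atTop_nhds_zero_nat
    rw [sub_zero] at h0
    exact le_of_tendsto' h0 (fun n => (key n).1)

noncomputable def uTerm (k : ℕ) (x : ℝ) : ℝ :=
  2 / ((k : ℝ) + 2) - 1 / ((k : ℝ) + 1 + x) - 1 / ((k : ℝ) + 2 - x)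

noncomputable def Gfun (x : ℝ) : ℝ := 2 + ∑' k : ℕ, uTerm k x

lemma uTerm_bound {x : ℝ} (hx : 0 ≤ x) (hx2 : x ≤ 1/2) (k : ℕ) :
    ‖uTerm k x‖ ≤ 2 * (1 / ((k : ℝ) + 1) ^ 2) := by
  have hk : (0:ℝ) ≤ (k : ℝ) := Nat.cast_nonneg k
  have hA : (0:ℝ) < (k : ℝ) + 2 := by positivity
  have hB : (0:ℝ) < (k : ℝ) + 1 + x := by positivity
  have hC : (0:ℝ) < (k : ℝ) + 2 - x := by linarith
  have h1 : (0:ℝ) < (k : ℝ) + 1 := by positivity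
  rw [Real.norm_eq_abs, abs_le]
  constructor
  · have hB1 : 1 / ((k:ℝ)+1+x) - 1 / ((k:ℝ)+2) ≤ 1 / ((k:ℝ)+1)^2 := by
      rw [div_sub_div _ _ hB.ne' hA.ne', div_le_div_iff₀ (by positivity) (by positivity)]
      nlinarith
    have hC1 : 1 / ((k:ℝ)+2-x) - 1 / ((k:ℝ)+2) ≤ 1 / ((k:ℝ)+1)^2 := by
      rw [div_sub_div _ _ hC.ne' hA.ne', div_le_div_iff₀ (by positivity) (by positivity)]
      nlinarith
    have h2A : 2/((k:ℝ)+2) = 1/((k:ℝ)+2) + 1/((k:ℝ)+2) := by ring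
    rw [uTerm]; linarith
  · have hB1 : 1 / ((k:ℝ)+2) ≤ 1 / ((k:ℝ)+1+x) := one_div_le_one_div_of_le hB (by linarith)
    have hC1 : 1 / ((k:ℝ)+2) ≤ 1 / ((k:ℝ)+2-x) := one_div_le_one_div_of_le hC (by linarith)
    have : (0:ℝ) ≤ 2 * (1 / ((k:ℝ)+1)^2) := by positivity
    have h2A : 2/((k:ℝ)+2) = 1/((k:ℝ)+2) + 1/((k:ℝ)+2) := by ring
    rw [uTerm]; linarith

lemma summable_uTerm {x : ℝ} (hx : 0 ≤ x) (hx2 : x ≤ 1/2) :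
    Summable (fun k : ℕ => uTerm k x) := by
  rw [← summable_abs_iff]
  refine Summable.of_nonneg_of_le (fun k => abs_nonneg _)
    (fun k => ?_) (summable_sq.mul_left 2)
  simpa [Real.norm_eq_abs] using uTerm_bound hx hx2 k

lemma continuousOn_Gfun : ContinuousOn Gfun (Icc 0 (1/2 : ℝ)) := by
  apply ContinuousOn.add continuousOn_const
  refine (tendstoUniformlyOn_tsum (summable_sq.mul_left 2)
    (fun k x hx => uTerm_bound hx.1 hx.2 k)).continuousOn
    (Filter.Eventually.of_forall (fun t => ?_)).frequently
  apply continuousOn_finset_sum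
  intro k _
  have hk : (0:ℝ) ≤ (k : ℝ) := Nat.cast_nonneg k
  unfold uTerm
  apply ContinuousOn.sub
  apply ContinuousOn.sub continuousOn_const
  · exact ContinuousOn.div continuousOn_const (by fun_prop)
      (fun x hx => by have := hx.1; have := hx.2; dsimp; positivity)
  · exact ContinuousOn.div continuousOn_const (by fun_prop)
      (fun x hx => by have := hx.1; have h2 := hx.2; dsimp; nlinarith)

lemma hasSum_tele : HasSum (fun k : ℕ => 1 / ((k:ℝ) + 1) - 1 / ((k:ℝ) + 1 + 1)) 1 := by
  have hnn : ∀ i : ℕ, (0:ℝ) ≤ 1 / ((i:ℝ) + 1) - 1 / ((i:ℝ) + 1 + 1) := by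
    intro i
    have : (0:ℝ) < (i:ℝ) + 1 := by positivity
    have := one_div_le_one_div_of_le this (by linarith : (i:ℝ) + 1 ≤ (i:ℝ) + 1 + 1)
    linarith
  rw [hasSum_iff_tendsto_nat_of_nonneg hnn]
  have tele : ∀ n : ℕ, ∑ i ∈ Finset.range n, (1 / ((i:ℝ) + 1) - 1 / ((i:ℝ) + 1 + 1))
      = 1 - 1 / ((n:ℝ) + 1) := by
    intro n
    have h := Finset.sum_range_sub' (f := fun i : ℕ => 1 / ((i:ℝ) + 1)) n
    simp only [Nat.cast_zero, zero_add, Nat.cast_add, Nat.cast_one] at h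
    rw [h]
    norm_num
  simp only [tele]
  have h0 : Tendsto (fun n : ℕ => 1 - 1 / ((n:ℝ) + 1)) atTop (𝓝 (1 - 0)) :=
    tendsto_const_nhds.sub tendsto_one_div_add_atTop_nhds_zero_nat
  simpa using h0

lemma Gfun_zero : Gfun 0 = 1 := by
  have hsum : HasSum (fun k : ℕ => uTerm k 0) (-1) := by
    have h1 : (fun k : ℕ => uTerm k 0)
        = fun k : ℕ => -((1:ℝ) / ((k:ℝ)+1) - 1 / ((k:ℝ)+1+1)) := by
      funext k
      have hk : (0:ℝ) ≤ (k : ℝ) := Nat.cast_nonneg k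
      have h1 : ((k:ℝ)+1) ≠ 0 := by positivity
      have h2 : ((k:ℝ)+2) ≠ 0 := by positivity
      unfold uTerm
      field_simp
      ring
    rw [h1]
    exact hasSum_tele.neg
  rw [Gfun, hsum.tsum_eq]; norm_num

lemma strictMonoOn_Gfun : StrictMonoOn Gfun (Icc 0 (1/2 : ℝ)) := by
  intro x hx y hy hxy
  have hterm : ∀ k : ℕ, uTerm k x < uTerm k y := by
    intro k
    have hk : (0:ℝ) ≤ (k : ℝ) := Nat.cast_nonneg k
    have hBx : (0:ℝ) < (k:ℝ) + 1 + x := by have := hx.1; positivity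
    have hCx : (0:ℝ) < (k:ℝ) + 2 - x := by have := hx.2; nlinarith
    have hBy : (0:ℝ) < (k:ℝ) + 1 + y := by have := hy.1; positivity
    have hCy : (0:ℝ) < (k:ℝ) + 2 - y := by have := hy.2; nlinarith
    have ex : 1/((k:ℝ)+1+x) + 1/((k:ℝ)+2-x)
        = (2*(k:ℝ)+3) / (((k:ℝ)+1+x) * ((k:ℝ)+2-x)) := by
      rw [div_add_div _ _ hBx.ne' hCx.ne']
      congr 1; ring
    have ey : 1/((k:ℝ)+1+y) + 1/((k:ℝ)+2-y)
        = (2*(k:ℝ)+3) / (((k:ℝ)+1+y) * ((k:ℝ)+2-y)) := by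
      rw [div_add_div _ _ hBy.ne' hCy.ne']
      congr 1; ring
    have hP : ((k:ℝ)+1+x) * ((k:ℝ)+2-x) < ((k:ℝ)+1+y) * ((k:ℝ)+2-y) := by
      have h1 := hx.1; have h2 := hy.2
      nlinarith
    have hlt := div_lt_div_of_pos_left (by positivity : (0:ℝ) < 2*(k:ℝ)+3)
      (mul_pos hBx hCx) hP
    unfold uTerm
    linarith [ex, ey, hlt]
  have := Summable.tsum_lt_tsum (i := 0) (fun k => (hterm k).le) (hterm 0)
    (summable_uTerm hx.1 hx.2) (summable_uTerm hy.1 hy.2)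
  unfold Gfun
  linarith

lemma xi_eq_Gfun {x : ℝ} (hx : 0 < x) (hx2 : x ≤ 1/2) :
    1 / (x * (1 - x)) - ramanujanR x = Gfun x := by
  have hx1 : x ≤ 1 := by linarith
  have h1x : 0 < 1 - x := by linarith
  have h1x1 : 1 - x ≤ 1 := by linarith
  have hA : HasSum (fun k : ℕ => 1/((k:ℝ)+1) - 1/((k:ℝ)+x))
      (digamma x + Real.eulerMascheroniConstant) := by
    have := (summable_digamma_term hx hx1).hasSum
    rwa [← digamma_add_gamma_eq hx hx1] at this
  have hB : HasSum (fun k : ℕ => 1/((k:ℝ)+1) - 1/((k:ℝ)+(1-x)))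
      (digamma (1-x) + Real.eulerMascheroniConstant) := by
    have := (summable_digamma_term h1x h1x1).hasSum
    rwa [← digamma_add_gamma_eq h1x h1x1] at this
  have hAB := hA.add hB
  set v : ℕ → ℝ := fun k => (1/((k:ℝ)+1) - 1/((k:ℝ)+x)) + (1/((k:ℝ)+1) - 1/((k:ℝ)+(1-x)))
    with hv
  set D := digamma x + Real.eulerMascheroniConstant
    + (digamma (1-x) + Real.eulerMascheroniConstant) with hD
  have hshift : HasSum (fun k : ℕ => v (k + 1)) (D - v 0) := by
    refine (hasSum_nat_add_iff (f := v) 1).mpr ?_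
    have : D - v 0 + ∑ i ∈ Finset.range 1, v i = D := by simp
    rw [this]
    exact hAB
  have hveq : (fun k : ℕ => v (k + 1)) = fun k => uTerm k x := by
    funext k
    simp only [hv, uTerm]
    push_cast
    ring
  rw [hveq] at hshift
  have hG : Gfun x = 2 + (D - v 0) := by rw [Gfun, hshift.tsum_eq]
  have hv0 : v 0 = 2 - 1/x - 1/(1-x) := by
    simp only [hv]
    norm_num
    ring
  have hsplit : 1/(x*(1-x)) = 1/x + 1/(1-x) := by
    field_simp
    ring
  rw [hG, hv0, hsplit, ramanujanR, hD]
  ring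

lemma xi_half : 1 / ((1/2:ℝ) * (1 - 1/2)) - ramanujanR (1/2) = 4 - 4 * Real.log 2 := by
  have hpi : Real.sqrt Real.pi ≠ 0 := by
    have := Real.pi_pos
    positivity
  have hd : digamma (1/2) = -(Real.eulerMascheroniConstant + 2 * Real.log 2) := by
    rw [digamma, Real.hasDerivAt_Gamma_one_half.deriv, Real.Gamma_one_half_eq]
    field_simp
  have h12 : (1:ℝ) - 1/2 = 1/2 := by norm_num
  rw [ramanujanR, h12, hd]
  norm_num
  ring

lemma Gfun_half : Gfun (1/2 : ℝ) = 4 - 4 * Real.log 2 := by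
  rw [← xi_eq_Gfun one_half_pos le_rfl]
  exact xi_half

theorem stmt4 :
    StrictMonoOn (fun x : ℝ => 1 / (x * (1 - x)) - ramanujanR x) (Set.Ioc 0 (1/2)) ∧
    Filter.Tendsto (fun x : ℝ => 1 / (x * (1 - x)) - ramanujanR x)
      (nhdsWithin 0 (Set.Ioi 0)) (nhds 1) ∧
    1 / ((1/2 : ℝ) * (1 - 1/2)) - ramanujanR (1/2) = 4 - 4 * Real.log 2 ∧
    (fun x : ℝ => 1 / (x * (1 - x)) - ramanujanR x) '' Set.Ioc 0 (1/2) =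
      Set.Ioc 1 (4 - 4 * Real.log 2) := by
  set F : ℝ → ℝ := fun x => 1 / (x * (1 - x)) - ramanujanR x with hF
  have hEq : EqOn F Gfun (Ioc 0 (1/2 : ℝ)) := fun x hx => xi_eq_Gfun hx.1 hx.2
  have h0mem : (0:ℝ) ∈ Icc (0:ℝ) (1/2) := ⟨le_rfl, by norm_num⟩
  have hhalfmem : (1/2:ℝ) ∈ Icc (0:ℝ) (1/2) := ⟨by norm_num, le_rfl⟩
  have hsub : Ioc (0:ℝ) (1/2) ⊆ Icc (0:ℝ) (1/2) := Ioc_subset_Icc_self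
  refine ⟨?_, ?_, xi_half, ?_⟩
  · intro x hx y hy hxy
    rw [hEq hx, hEq hy]
    exact strictMonoOn_Gfun (hsub hx) (hsub hy) hxy
  · have h1 : Tendsto Gfun (nhdsWithin 0 (Icc (0:ℝ) (1/2))) (nhds 1) := by
      have := continuousOn_Gfun 0 h0mem
      rw [ContinuousWithinAt, Gfun_zero] at this
      exact this
    have h2 : nhdsWithin (0:ℝ) (Ioc 0 (1/2)) = nhdsWithin 0 (Ioi 0) :=
      nhdsWithin_Ioc_eq_nhdsGT (by norm_num)
    rw [← h2]
    refine Tendsto.congr' ?_ (h1.mono_left (nhdsWithin_mono _ hsub))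
    filter_upwards [self_mem_nhdsWithin] with x hx using (hEq hx).symm
  · have himg : F '' Ioc 0 (1/2) = Gfun '' Ioc 0 (1/2) := hEq.image_eq
    apply Set.Subset.antisymm
    · rintro _ ⟨x, hx, rfl⟩
      constructor
      · have := strictMonoOn_Gfun h0mem (hsub hx) hx.1
        rw [Gfun_zero] at this
        rw [hEq hx]
        exact this
      · rw [hEq hx, ← Gfun_half]
        rcases eq_or_lt_of_le hx.2 with rfl | h
        · exact le_rfl
        · exact (strictMonoOn_Gfun (hsub hx) hhalfmem h).le
    · rw [himg]
      have := intermediate_value_Ioc (by norm_num : (0:ℝ) ≤ 1/2) continuousOn_Gfun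
      rw [Gfun_zero, Gfun_half] at this
      exact this
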